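/- Let G be a finite directed graph, let r be the number of vertices of G having in-degree zero, and let p_min be the minimum number of paths over all path-and-cycle covers of G. Then for every integer k ≥ 3, the minimum over all necklace covers of G of the quantity (k − 1)·N_O + 2·N_L equals (k − 1)·r + 2·(p_min − r), where N_O is the number of open necklaces and N_L the number of pendant leaves of the necklace cover. -/

import Mathlib

open scoped Classical

variable {V : Type*} [DecidableEq V]

/-- In-degree of `v` in the digraph with edge set `E`. -/
def indeg (E : Finset (V × V)) (v : V) : ℕ := (E.filter (fun e => e.2 = v)).card

/-- Out-degree of `v` in the digraph with edge set `E`. -/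
def outdeg (E : Finset (V × V)) (v : V) : ℕ := (E.filter (fun e => e.1 = v)).card

/-- `l` is a simple directed path (possibly a single vertex) in the digraph `E`. -/
def IsDiPath (E : Finset (V × V)) (l : List V) : Prop :=
  l ≠ [] ∧ l.Nodup ∧ l.Chain' (fun u v => (u, v) ∈ E)

/-- `l` is a simple directed cycle in the digraph `E`. -/
def IsDiCycle (E : Finset (V × V)) (l : List V) : Prop :=
  ∃ h : l ≠ [], l.Nodup ∧ l.Chain' (fun u v => (u, v) ∈ E) ∧
    (l.getLast h, l.head h) ∈ E

/-- A path-and-cycle cover (PC cover) of the digraph `E`. -/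
structure PCCover (E : Finset (V × V)) where
  paths : Finset (List V)
  cycles : Finset (List V)
  paths_are : ∀ l ∈ paths, IsDiPath E l
  cycles_are : ∀ l ∈ cycles, IsDiCycle E l
  disj : Disjoint paths cycles
  pairwiseDisj : ∀ l₁ ∈ paths ∪ cycles, ∀ l₂ ∈ paths ∪ cycles, l₁ ≠ l₂ → ∀ v ∈ l₁, v ∉ l₂
  covers : ∀ v : V, ∃ l ∈ paths ∪ cycles, v ∈ l

/-- Edge set of the split bipartite graph of the digraph `E`, on vertex set `V ⊕ V`
(`Sum.inl` is the left copy `f_L`, `Sum.inr` the right copy `f_R`). -/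
def splitEdges (E : Finset (V × V)) : Finset ((V ⊕ V) × (V ⊕ V)) :=
  E.image (fun e => (Sum.inl e.1, Sum.inr e.2))

/-- A set of edges is a matching if no two of its edges share an endpoint. -/
def IsMatching {W : Type*} (M : Finset (W × W)) : Prop :=
  ∀ e₁ ∈ M, ∀ e₂ ∈ M, e₁ ≠ e₂ →
    e₁.1 ≠ e₂.1 ∧ e₁.1 ≠ e₂.2 ∧ e₁.2 ≠ e₂.1 ∧ e₁.2 ≠ e₂.2

/-- The set `F ⊆ E` of edges of `G` pulled back from a matching of the split bipartite graph. -/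
def pullback (E : Finset (V × V)) (M : Finset ((V ⊕ V) × (V ⊕ V))) : Finset (V × V) :=
  E.filter (fun e => (Sum.inl e.1, Sum.inr e.2) ∈ M)

/-- Weak reachability (reachability after forgetting edge directions) in the digraph `F`. -/
def WReach (F : Finset (V × V)) (a b : V) : Prop :=
  Relation.ReflTransGen (fun x y => (x, y) ∈ F ∨ (y, x) ∈ F) a b

/-- `H = (verts, edges)` is a necklace of the digraph `E`: a weakly connected subgraph of `E`
in which every vertex has in-degree at most one. -/
def IsNecklace (E : Finset (V × V)) (H : Finset V × Finset (V × V)) : Prop :=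
  H.1.Nonempty ∧ H.2 ⊆ E ∧ (∀ e ∈ H.2, e.1 ∈ H.1 ∧ e.2 ∈ H.1) ∧
  (∀ a ∈ H.1, ∀ b ∈ H.1,
    Relation.ReflTransGen (fun x y => (x, y) ∈ H.2 ∨ (y, x) ∈ H.2) a b) ∧
  (∀ v ∈ H.1, indeg H.2 v ≤ 1)

/-- A necklace is closed if it contains a directed cycle (and open otherwise). -/
def IsClosedNecklace (H : Finset V × Finset (V × V)) : Prop :=
  ∃ l : List V, IsDiCycle H.2 l

/-- `C` is a necklace cover of the digraph `E`: a collection of necklaces with pairwise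
disjoint vertex sets covering every vertex. -/
def IsNecklaceCover (E : Finset (V × V)) (C : Finset (Finset V × Finset (V × V))) : Prop :=
  (∀ H ∈ C, IsNecklace E H) ∧
  (∀ H₁ ∈ C, ∀ H₂ ∈ C, H₁ ≠ H₂ → Disjoint H₁.1 H₂.1) ∧
  (∀ v : V, ∃ H ∈ C, v ∈ H.1)

/-- `N_O`: the number of open necklaces of the cover `C`. -/
noncomputable def numOpen (C : Finset (Finset V × Finset (V × V))) : ℕ :=
  (C.filter (fun H => ¬ IsClosedNecklace H)).card

/-- Total number of vertices of out-degree zero within their necklace, over the cover `C`. -/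
def numSinks (C : Finset (Finset V × Finset (V × V))) : ℕ :=
  ∑ H ∈ C, (H.1.filter (fun v => outdeg H.2 v = 0)).card

/-- `N_L`: the number of pendant leaves of the cover `C` (total number of out-degree-zero
vertices within their necklace, minus the number of open necklaces). -/
noncomputable def numLeaves (C : Finset (Finset V × Finset (V × V))) : ℕ :=
  numSinks C - numOpen C

set_option linter.unusedSectionVars false

section Aux

-- basic lemmas
theorem indeg_mono {F G : Finset (V × V)} (h : F ⊆ G) (v : V) : indeg F v ≤ indeg G v :=
  Finset.card_le_card (Finset.filter_subset_filter _ h)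

theorem outdeg_mono {F G : Finset (V × V)} (h : F ⊆ G) (v : V) : outdeg F v ≤ outdeg G v :=
  Finset.card_le_card (Finset.filter_subset_filter _ h)

theorem indeg_eq_zero_iff {F : Finset (V × V)} {v : V} :
    indeg F v = 0 ↔ ∀ e ∈ F, e.2 ≠ v := by
  simp [indeg, Finset.card_eq_zero, Finset.filter_eq_empty_iff]

theorem indeg_pos_of_mem {F : Finset (V × V)} {e : V × V} (he : e ∈ F) : 1 ≤ indeg F e.2 := by
  rw [Nat.one_le_iff_ne_zero]
  intro h
  exact indeg_eq_zero_iff.1 h e he rfl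

theorem outdeg_eq_zero_iff {F : Finset (V × V)} {v : V} :
    outdeg F v = 0 ↔ ∀ e ∈ F, e.1 ≠ v := by
  simp [outdeg, Finset.card_eq_zero, Finset.filter_eq_empty_iff]

theorem outdeg_pos_of_mem {F : Finset (V × V)} {e : V × V} (he : e ∈ F) : 1 ≤ outdeg F e.1 := by
  rw [Nat.one_le_iff_ne_zero]
  intro h
  exact outdeg_eq_zero_iff.1 h e he rfl

theorem indeg_le_one_unique {F : Finset (V × V)} {v a b : V} (h : indeg F v ≤ 1)
    (ha : (a, v) ∈ F) (hb : (b, v) ∈ F) : a = b := by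
  have := Finset.card_le_one.1 h (a, v) (by simp [ha]) (b, v) (by simp [hb])
  exact congrArg Prod.fst this

theorem indeg_le_one_of_unique {F : Finset (V × V)} {v : V}
    (h : ∀ a b : V, (a, v) ∈ F → (b, v) ∈ F → a = b) : indeg F v ≤ 1 := by
  apply Finset.card_le_one.2
  rintro ⟨a, x⟩ hax ⟨b, y⟩ hby
  simp only [Finset.mem_filter] at hax hby
  obtain ⟨hax, rfl⟩ := hax
  obtain ⟨hby, rfl⟩ := hby
  exact Prod.ext (h a b hax hby) rfl

theorem outdeg_le_one_unique {F : Finset (V × V)} {v a b : V} (h : outdeg F v ≤ 1)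
    (ha : (v, a) ∈ F) (hb : (v, b) ∈ F) : a = b := by
  have := Finset.card_le_one.1 h (v, a) (by simp [ha]) (v, b) (by simp [hb])
  exact congrArg Prod.snd this

theorem outdeg_le_one_of_unique {F : Finset (V × V)} {v : V}
    (h : ∀ a b : V, (v, a) ∈ F → (v, b) ∈ F → a = b) : outdeg F v ≤ 1 := by
  apply Finset.card_le_one.2
  rintro ⟨x, a⟩ hax ⟨y, b⟩ hby
  simp only [Finset.mem_filter] at hax hby
  obtain ⟨hax, rfl⟩ := hax
  obtain ⟨hby, rfl⟩ := hby
  exact Prod.ext rfl (h a b hax hby)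

/-- the set of in-degree-zero vertices -/
noncomputable def roots [Fintype V] (F : Finset (V × V)) : Finset V :=
  Finset.univ.filter (fun v => indeg F v = 0)

noncomputable def sinks [Fintype V] (F : Finset (V × V)) : Finset V :=
  Finset.univ.filter (fun v => outdeg F v = 0)

theorem card_eq_sum_indeg [Fintype V] (F : Finset (V × V)) :
    F.card = ∑ v : V, indeg F v := by
  exact Finset.card_eq_sum_card_fiberwise (fun e _ => Finset.mem_univ e.2)

theorem G1 [Fintype V] {F : Finset (V × V)} (h : ∀ v, indeg F v ≤ 1) :
    F.card + (roots F).card = Fintype.card V := by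
  rw [card_eq_sum_indeg]
  rw [← Finset.sum_filter_add_sum_filter_not Finset.univ (fun v => indeg F v = 0)]
  have h1 : ∑ v ∈ Finset.univ.filter (fun v => indeg F v = 0), indeg F v = 0 :=
    Finset.sum_eq_zero (fun v hv => (Finset.mem_filter.1 hv).2)
  have h2 : ∑ v ∈ Finset.univ.filter (fun v => ¬ indeg F v = 0), indeg F v
      = (Finset.univ.filter (fun v => ¬ indeg F v = 0)).card := by
    rw [Finset.card_eq_sum_ones]
    apply Finset.sum_congr rfl
    intro v hv
    have h3 := (Finset.mem_filter.1 hv).2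
    have h4 := h v
    omega
  rw [h1, h2]
  have := Finset.card_filter_add_card_filter_not (s := (Finset.univ : Finset V))
    (p := fun v => indeg F v = 0)
  simp only [Finset.card_univ] at this
  rw [roots]
  omega

theorem card_eq_sum_outdeg [Fintype V] (F : Finset (V × V)) :
    F.card = ∑ v : V, outdeg F v := by
  exact Finset.card_eq_sum_card_fiberwise (fun e _ => Finset.mem_univ e.1)

theorem G1' [Fintype V] {F : Finset (V × V)} (h : ∀ v, outdeg F v ≤ 1) :
    F.card + (sinks F).card = Fintype.card V := by
  rw [card_eq_sum_outdeg]
  rw [← Finset.sum_filter_add_sum_filter_not Finset.univ (fun v => outdeg F v = 0)]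
  have h1 : ∑ v ∈ Finset.univ.filter (fun v => outdeg F v = 0), outdeg F v = 0 :=
    Finset.sum_eq_zero (fun v hv => (Finset.mem_filter.1 hv).2)
  have h2 : ∑ v ∈ Finset.univ.filter (fun v => ¬ outdeg F v = 0), outdeg F v
      = (Finset.univ.filter (fun v => ¬ outdeg F v = 0)).card := by
    rw [Finset.card_eq_sum_ones]
    apply Finset.sum_congr rfl
    intro v hv
    have h3 := (Finset.mem_filter.1 hv).2
    have h4 := h v
    omega
  rw [h1, h2]
  have := Finset.card_filter_add_card_filter_not (s := (Finset.univ : Finset V))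
    (p := fun v => outdeg F v = 0)
  simp only [Finset.card_univ] at this
  rw [sinks]
  omega

theorem mem_tails_iff [Fintype V] {F : Finset (V × V)} {v : V} :
    v ∈ F.image Prod.fst ↔ outdeg F v ≠ 0 := by
  simp only [Finset.mem_image, ne_eq, outdeg_eq_zero_iff, not_forall]
  constructor
  · rintro ⟨e, he, rfl⟩; exact ⟨e, he, by simp⟩
  · rintro ⟨e, he, h⟩; exact ⟨e, he, not_not.1 h⟩

theorem G2 [Fintype V] (F : Finset (V × V)) :
    (sinks F).card + (F.image Prod.fst).card = Fintype.card V := by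
  have : sinks F = (F.image Prod.fst)ᶜ := by
    ext v
    simp only [sinks, Finset.mem_filter, Finset.mem_univ, true_and, Finset.mem_compl,
      mem_tails_iff, not_not]
  rw [this]
  have h1 := Finset.card_compl_add_card (F.image Prod.fst)
  omega

/-- Edges between consecutive elements of a list. -/
def chainEdges (l : List V) : Finset (V × V) := (l.zip l.tail).toFinset

def closeEdge : List V → Finset (V × V)
  | [] => ∅
  | (a :: l) => {((a :: l).getLast (by simp), a)}

theorem mem_zip_tail_iff {l : List V} {a b : V} :
    (a, b) ∈ l.zip l.tail ↔ ∃ i, ∃ h : i + 1 < l.length, l[i] = a ∧ l[i+1] = b := by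
  induction l with
  | nil => simp
  | cons x t ih =>
    cases t with
    | nil => simp
    | cons y s =>
      simp only [List.tail_cons, List.zip_cons_cons, List.mem_cons, Prod.mk.injEq]
      constructor
      · rintro (⟨rfl, rfl⟩ | h)
        · exact ⟨0, by simp, by simp, by simp⟩
        · have h2 : (a, b) ∈ (y :: s).zip (y :: s).tail := by simpa using h
          obtain ⟨i, hi, h1, h2⟩ := ih.1 h2
          exact ⟨i + 1, by simpa using hi, by simpa using h1, by simpa using h2⟩
      · rintro ⟨i, hi, h1, h2⟩
        cases i with
        | zero =>
          left
          simp only [List.getElem_cons_zero, List.getElem_cons_succ] at h1 h2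
          exact ⟨h1.symm, h2.symm⟩
        | succ j =>
          right
          have : (a, b) ∈ (y :: s).zip (y :: s).tail := by
            apply ih.2
            exact ⟨j, by simpa using hi, by simpa using h1, by simpa using h2⟩
          simpa using this

theorem mem_chainEdges_iff {l : List V} {a b : V} :
    (a, b) ∈ chainEdges l ↔ ∃ i, ∃ h : i + 1 < l.length, l[i] = a ∧ l[i+1] = b := by
  rw [chainEdges, List.mem_toFinset, mem_zip_tail_iff]

theorem chainEdges_fst_mem {l : List V} {e : V × V} (h : e ∈ chainEdges l) : e.1 ∈ l := by
  obtain ⟨a, b⟩ := e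
  obtain ⟨i, hi, h1, h2⟩ := mem_chainEdges_iff.1 h
  exact h1 ▸ List.getElem_mem _

theorem chainEdges_snd_mem {l : List V} {e : V × V} (h : e ∈ chainEdges l) : e.2 ∈ l := by
  obtain ⟨a, b⟩ := e
  obtain ⟨i, hi, h1, h2⟩ := mem_chainEdges_iff.1 h
  exact h2 ▸ List.getElem_mem _

theorem chainEdges_rel {l : List V} {R : V → V → Prop} (hl : l.Chain' R)
    {e : V × V} (h : e ∈ chainEdges l) : R e.1 e.2 := by
  obtain ⟨a, b⟩ := e
  obtain ⟨i, hi, h1, h2⟩ := mem_chainEdges_iff.1 h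
  subst h1 h2
  replace hl := List.isChain_iff_getElem.1 hl
  simpa using hl i (by omega)

theorem chainEdges_of_chain' {l : List V} {R : V → V → Prop} (hl : l.Chain' R) :
    ∀ e ∈ chainEdges l, R e.1 e.2 := fun _ h => chainEdges_rel hl h

theorem closeEdge_eq {l : List V} (h : l ≠ []) :
    closeEdge l = {(l.getLast h, l.head h)} := by
  cases l with
  | nil => simp at h
  | cons a t => simp [closeEdge]

theorem mem_closeEdge {l : List V} {e : V × V} (he : e ∈ closeEdge l) :
    ∃ h : l ≠ [], e = (l.getLast h, l.head h) := by
  cases l with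
  | nil => simp [closeEdge] at he
  | cons a t =>
    refine ⟨by simp, ?_⟩
    simpa [closeEdge] using he

theorem getLast_eq_getElem' {l : List V} (h : l ≠ []) :
    l.getLast h = l[l.length - 1]'(by cases l <;> simp_all) := by
  exact List.getLast_eq_getElem h

theorem head_eq_getElem' {l : List V} (h : l ≠ []) :
    l.head h = l[0]'(by cases l <;> simp_all) := by
  cases l with
  | nil => simp at h
  | cons a t => simp

/-- membership of a chain edge into a nodup list determines the predecessor -/
theorem chainEdges_pred_unique {l : List V} (hl : l.Nodup) {a b v : V}
    (ha : (a, v) ∈ chainEdges l) (hb : (b, v) ∈ chainEdges l) : a = b := by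
  obtain ⟨i, hi, hi1, hi2⟩ := mem_chainEdges_iff.1 ha
  obtain ⟨j, hj, hj1, hj2⟩ := mem_chainEdges_iff.1 hb
  have hij : i = j := by
    have h1 : l[i+1] = l[j+1] := by rw [hi2, hj2]
    have := (List.Nodup.getElem_inj_iff hl).1 h1
    omega
  subst hij
  rw [← hi1, ← hj1]

section Stage3
variable {E : Finset (V × V)}

theorem chainEdges_nil : chainEdges ([] : List V) = ∅ := rfl
theorem chainEdges_singleton (a : V) : chainEdges [a] = ∅ := rfl

theorem chainEdges_cons₂ (a b : V) (t : List V) :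
    chainEdges (a :: b :: t) = insert (a, b) (chainEdges (b :: t)) := by
  simp [chainEdges]

theorem chainEdges_append {l₁ l₂ : List V} (h₁ : l₁ ≠ []) (h₂ : l₂ ≠ []) :
    chainEdges (l₁ ++ l₂)
      = insert (l₁.getLast h₁, l₂.head h₂) (chainEdges l₁ ∪ chainEdges l₂) := by
  induction l₁ with
  | nil => simp at h₁
  | cons a t ih =>
    cases t with
    | nil =>
      cases l₂ with
      | nil => simp at h₂
      | cons b s =>
        simp only [List.singleton_append, chainEdges_cons₂]
        simp [chainEdges_singleton]
    | cons x t' =>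
      have hne : (x :: t') ++ l₂ ≠ [] := by simp
      simp only [List.cons_append, chainEdges_cons₂]
      have ihs := ih (by simp)
      rw [List.cons_append] at ihs
      rw [ihs]
      have hgl : (a :: x :: t').getLast h₁ = (x :: t').getLast (by simp) := by
        simp [List.getLast_cons]
      rw [hgl]
      ext p
      simp only [Finset.mem_insert, Finset.mem_union, chainEdges_cons₂]
      tauto

/-- The edge set of a PC cover given by its paths `P` and cycles `Q`. -/
def pcE (P Q : Finset (List V)) : Finset (V × V) :=
  P.biUnion chainEdges ∪ Q.biUnion (fun l => chainEdges l ∪ closeEdge l)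

theorem pcE_subset (C : PCCover E) : pcE C.paths C.cycles ⊆ E := by
  intro e he
  rw [pcE, Finset.mem_union] at he
  rcases he with he | he
  · obtain ⟨l, hl, he⟩ := Finset.mem_biUnion.1 he
    exact chainEdges_rel (C.paths_are l hl).2.2 he
  · obtain ⟨l, hl, he⟩ := Finset.mem_biUnion.1 he
    obtain ⟨hne, hnd, hch, hcl⟩ := C.cycles_are l hl
    rcases Finset.mem_union.1 he with he | he
    · exact chainEdges_rel hch he
    · obtain ⟨h', heq⟩ := mem_closeEdge he
      rw [heq]
      exact hcl

/-- Any edge of the cover lies (with both endpoints) inside a single member list. -/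
theorem pcE_mem_list (C : PCCover E) {e : V × V} (he : e ∈ pcE C.paths C.cycles) :
    ∃ l ∈ C.paths ∪ C.cycles, e.1 ∈ l ∧ e.2 ∈ l := by
  rw [pcE, Finset.mem_union] at he
  rcases he with he | he
  · obtain ⟨l, hl, he⟩ := Finset.mem_biUnion.1 he
    exact ⟨l, Finset.mem_union_left _ hl, chainEdges_fst_mem he, chainEdges_snd_mem he⟩
  · obtain ⟨l, hl, he⟩ := Finset.mem_biUnion.1 he
    refine ⟨l, Finset.mem_union_right _ hl, ?_⟩
    rcases Finset.mem_union.1 he with he | he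
    · exact ⟨chainEdges_fst_mem he, chainEdges_snd_mem he⟩
    · obtain ⟨h', heq⟩ := mem_closeEdge he
      rw [heq]
      exact ⟨List.getLast_mem h', List.head_mem h'⟩

/-- The unique member list containing a given vertex. -/
theorem cover_unique_list (C : PCCover E) {v : V} {l₁ l₂ : List V}
    (h₁ : l₁ ∈ C.paths ∪ C.cycles) (h₂ : l₂ ∈ C.paths ∪ C.cycles)
    (hv₁ : v ∈ l₁) (hv₂ : v ∈ l₂) : l₁ = l₂ := by
  by_contra hne
  exact C.pairwiseDisj l₁ h₁ l₂ h₂ hne v hv₁ hv₂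

theorem cover_nodup (C : PCCover E) {l : List V} (hl : l ∈ C.paths ∪ C.cycles) : l.Nodup := by
  rcases Finset.mem_union.1 hl with h | h
  · exact (C.paths_are l h).2.1
  · obtain ⟨_, hnd, _, _⟩ := C.cycles_are l h
    exact hnd

theorem chain_edge_mem {l : List V} {i : ℕ} (h : i + 1 < l.length) :
    (l[i], l[i+1]) ∈ chainEdges l := mem_chainEdges_iff.2 ⟨i, h, rfl, rfl⟩

/-- uniqueness of predecessor within one nodup list (incl. possible closing edge) -/
theorem list_pred_unique {l : List V} (hnd : l.Nodup) {a b v : V}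
    (ha : (a, v) ∈ chainEdges l ∪ closeEdge l) (hb : (b, v) ∈ chainEdges l ∪ closeEdge l) :
    a = b := by
  have key : ∀ {x : V}, (x, v) ∈ chainEdges l → (∃ h : l ≠ [], v = l.head h) → False := by
    intro x hx ⟨h, hv⟩
    obtain ⟨i, hi, h1, h2⟩ := mem_chainEdges_iff.1 hx
    rw [head_eq_getElem'] at hv
    have : i + 1 = 0 := (List.Nodup.getElem_inj_iff hnd).1 (by rw [h2, ← hv])
    omega
  rcases Finset.mem_union.1 ha with ha' | ha' <;> rcases Finset.mem_union.1 hb with hb' | hb'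
  · exact chainEdges_pred_unique hnd ha' hb'
  · obtain ⟨h, heq⟩ := mem_closeEdge hb'
    exact (key ha' ⟨h, congrArg Prod.snd heq⟩).elim
  · obtain ⟨h, heq⟩ := mem_closeEdge ha'
    exact (key hb' ⟨h, congrArg Prod.snd heq⟩).elim
  · obtain ⟨h₁, heq₁⟩ := mem_closeEdge ha'
    obtain ⟨h₂, heq₂⟩ := mem_closeEdge hb'
    simp only [Prod.ext_iff] at heq₁ heq₂
    rw [heq₁.1, heq₂.1]

/-- uniqueness of successor within one nodup list (incl. possible closing edge) -/
theorem list_succ_unique {l : List V} (hnd : l.Nodup) {a b v : V}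
    (ha : (v, a) ∈ chainEdges l ∪ closeEdge l) (hb : (v, b) ∈ chainEdges l ∪ closeEdge l) :
    a = b := by
  have key : ∀ {x : V}, (v, x) ∈ chainEdges l → (∃ h : l ≠ [], v = l.getLast h) → False := by
    intro x hx ⟨h, hv⟩
    obtain ⟨i, hi, h1, h2⟩ := mem_chainEdges_iff.1 hx
    rw [getLast_eq_getElem'] at hv
    have : i = l.length - 1 := (List.Nodup.getElem_inj_iff hnd).1 (by rw [h1, ← hv])
    omega
  rcases Finset.mem_union.1 ha with ha' | ha' <;> rcases Finset.mem_union.1 hb with hb' | hb'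
  · obtain ⟨i, hi, hi1, hi2⟩ := mem_chainEdges_iff.1 ha'
    obtain ⟨j, hj, hj1, hj2⟩ := mem_chainEdges_iff.1 hb'
    have hij : i = j := (List.Nodup.getElem_inj_iff hnd).1 (by rw [hi1, hj1])
    subst hij
    rw [← hi2, ← hj2]
  · obtain ⟨h, heq⟩ := mem_closeEdge hb'
    exact (key ha' ⟨h, congrArg Prod.fst heq⟩).elim
  · obtain ⟨h, heq⟩ := mem_closeEdge ha'
    exact (key hb' ⟨h, congrArg Prod.fst heq⟩).elim
  · obtain ⟨h₁, heq₁⟩ := mem_closeEdge ha'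
    obtain ⟨h₂, heq₂⟩ := mem_closeEdge hb'
    simp only [Prod.ext_iff] at heq₁ heq₂
    rw [heq₁.2, heq₂.2]

theorem pcE_mem_list' (C : PCCover E) {e : V × V} (he : e ∈ pcE C.paths C.cycles) :
    ∃ l, e.1 ∈ l ∧ e.2 ∈ l ∧
      ((l ∈ C.paths ∧ e ∈ chainEdges l) ∨ (l ∈ C.cycles ∧ e ∈ chainEdges l ∪ closeEdge l)) := by
  rw [pcE, Finset.mem_union] at he
  rcases he with he | he
  · obtain ⟨l, hl, he⟩ := Finset.mem_biUnion.1 he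
    exact ⟨l, chainEdges_fst_mem he, chainEdges_snd_mem he, Or.inl ⟨hl, he⟩⟩
  · obtain ⟨l, hl, he⟩ := Finset.mem_biUnion.1 he
    refine ⟨l, ?_, ?_, Or.inr ⟨hl, he⟩⟩ <;>
    · rcases Finset.mem_union.1 he with he' | he'
      · first
        | exact chainEdges_fst_mem he'
        | exact chainEdges_snd_mem he'
      · obtain ⟨h', heq⟩ := mem_closeEdge he'
        rw [heq]
        first
        | exact List.getLast_mem h'
        | exact List.head_mem h'

theorem pcE_indeg (C : PCCover E) (v : V) : indeg (pcE C.paths C.cycles) v ≤ 1 := by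
  apply indeg_le_one_of_unique
  intro a b ha hb
  obtain ⟨l₁, ha1, ha2, hcase₁⟩ := pcE_mem_list' C ha
  obtain ⟨l₂, hb1, hb2, hcase₂⟩ := pcE_mem_list' C hb
  have hl₁ : l₁ ∈ C.paths ∪ C.cycles := by
    rcases hcase₁ with ⟨h, _⟩ | ⟨h, _⟩
    · exact Finset.mem_union_left _ h
    · exact Finset.mem_union_right _ h
  have hl₂ : l₂ ∈ C.paths ∪ C.cycles := by
    rcases hcase₂ with ⟨h, _⟩ | ⟨h, _⟩
    · exact Finset.mem_union_left _ h
    · exact Finset.mem_union_right _ h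
  have : l₁ = l₂ := cover_unique_list C hl₁ hl₂ ha2 hb2
  subst this
  have hnd := cover_nodup C hl₁
  have hme : ∀ {x : V} , (x, v) ∈ chainEdges l₁ → (x, v) ∈ chainEdges l₁ ∪ closeEdge l₁ :=
    fun h => Finset.mem_union_left _ h
  rcases hcase₁ with ⟨_, h₁⟩ | ⟨_, h₁⟩ <;> rcases hcase₂ with ⟨_, h₂⟩ | ⟨_, h₂⟩
  · exact list_pred_unique hnd (hme h₁) (hme h₂)
  · exact list_pred_unique hnd (hme h₁) h₂
  · exact list_pred_unique hnd h₁ (hme h₂)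
  · exact list_pred_unique hnd h₁ h₂

theorem pcE_outdeg (C : PCCover E) (v : V) : outdeg (pcE C.paths C.cycles) v ≤ 1 := by
  apply outdeg_le_one_of_unique
  intro a b ha hb
  obtain ⟨l₁, ha1, ha2, hcase₁⟩ := pcE_mem_list' C ha
  obtain ⟨l₂, hb1, hb2, hcase₂⟩ := pcE_mem_list' C hb
  have hl₁ : l₁ ∈ C.paths ∪ C.cycles := by
    rcases hcase₁ with ⟨h, _⟩ | ⟨h, _⟩
    · exact Finset.mem_union_left _ h
    · exact Finset.mem_union_right _ h
  have hl₂ : l₂ ∈ C.paths ∪ C.cycles := by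
    rcases hcase₂ with ⟨h, _⟩ | ⟨h, _⟩
    · exact Finset.mem_union_left _ h
    · exact Finset.mem_union_right _ h
  have : l₁ = l₂ := cover_unique_list C hl₁ hl₂ ha1 hb1
  subst this
  have hnd := cover_nodup C hl₁
  have hme : ∀ {x : V} , (v, x) ∈ chainEdges l₁ → (v, x) ∈ chainEdges l₁ ∪ closeEdge l₁ :=
    fun h => Finset.mem_union_left _ h
  rcases hcase₁ with ⟨_, h₁⟩ | ⟨_, h₁⟩ <;> rcases hcase₂ with ⟨_, h₂⟩ | ⟨_, h₂⟩
  · exact list_succ_unique hnd (hme h₁) (hme h₂)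
  · exact list_succ_unique hnd (hme h₁) h₂
  · exact list_succ_unique hnd h₁ (hme h₂)
  · exact list_succ_unique hnd h₁ h₂

end Stage3

section Stage4
variable {E : Finset (V × V)}

theorem chainEdges_subset_pcE_paths {C : PCCover E} {l : List V} (hl : l ∈ C.paths) :
    chainEdges l ⊆ pcE C.paths C.cycles := by
  intro e he
  exact Finset.mem_union_left _ (Finset.mem_biUnion.2 ⟨l, hl, he⟩)

theorem chainEdges_subset_pcE_cycles {C : PCCover E} {l : List V} (hl : l ∈ C.cycles) :
    chainEdges l ∪ closeEdge l ⊆ pcE C.paths C.cycles := by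
  intro e he
  exact Finset.mem_union_right _ (Finset.mem_biUnion.2 ⟨l, hl, he⟩)

theorem path_head_root (C : PCCover E) {l : List V} (hl : l ∈ C.paths) (hne : l ≠ []) :
    indeg (pcE C.paths C.cycles) (l.head hne) = 0 := by
  rw [indeg_eq_zero_iff]
  rintro ⟨x, y⟩ he hy
  subst hy
  obtain ⟨l', h1, h2, hcase⟩ := pcE_mem_list' C he
  simp only at h1 h2
  have hl' : l' ∈ C.paths ∪ C.cycles := by
    rcases hcase with ⟨h, _⟩ | ⟨h, _⟩
    · exact Finset.mem_union_left _ h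
    · exact Finset.mem_union_right _ h
  have heq : l' = l := cover_unique_list C hl' (Finset.mem_union_left _ hl) h2 (List.head_mem hne)
  subst heq
  have hnd := (C.paths_are l' hl).2.1
  rcases hcase with ⟨_, hch⟩ | ⟨hcyc, _⟩
  · obtain ⟨i, hi, hi1, hi2⟩ := mem_chainEdges_iff.1 hch
    rw [head_eq_getElem'] at hi2
    have : i + 1 = 0 := (List.Nodup.getElem_inj_iff hnd).1 hi2
    omega
  · exact (Finset.disjoint_left.1 C.disj hl hcyc).elim

theorem root_is_path_head [Fintype V] (C : PCCover E) {v : V}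
    (hv : v ∈ roots (pcE C.paths C.cycles)) :
    ∃ l, ∃ hl : l ∈ C.paths, ∃ hne : l ≠ [], l.head hne = v := by
  have hroot : indeg (pcE C.paths C.cycles) v = 0 := (Finset.mem_filter.1 hv).2
  obtain ⟨l, hl, hvl⟩ := C.covers v
  obtain ⟨i, hi, hiv⟩ := List.mem_iff_getElem.1 hvl
  have hne : l ≠ [] := by
    intro h; subst h; simp at hi
  have no_in : ∀ e ∈ pcE C.paths C.cycles, e.2 ≠ v := indeg_eq_zero_iff.1 hroot
  have hipos : i = 0 := by
    by_contra hi0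
    have h1 : (i - 1) + 1 < l.length := by omega
    have := chain_edge_mem h1
    have hmem : (l[i-1], l[(i-1)+1]) ∈ pcE C.paths C.cycles := by
      rcases Finset.mem_union.1 hl with h | h
      · exact chainEdges_subset_pcE_paths h this
      · exact chainEdges_subset_pcE_cycles h (Finset.mem_union_left _ this)
    have : l[(i-1)+1] = v := by
      simp only [show i - 1 + 1 = i from by omega]
      exact hiv
    exact no_in _ hmem this
  subst hipos
  have hvhead : l.head hne = v := by rw [head_eq_getElem', hiv]
  rcases Finset.mem_union.1 hl with h | h
  · exact ⟨l, h, hne, hvhead⟩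
  · exfalso
    have hcl : (l.getLast hne, l.head hne) ∈ pcE C.paths C.cycles := by
      apply chainEdges_subset_pcE_cycles h
      rw [closeEdge_eq hne]
      exact Finset.mem_union_right _ (Finset.mem_singleton_self _)
    exact no_in _ hcl hvhead

theorem pcE_roots_card [Fintype V] (C : PCCover E) :
    C.paths.card = (roots (pcE C.paths C.cycles)).card := by
  apply Finset.card_bij (fun l hl => l.head ((C.paths_are l hl).1))
  · intro l hl
    simp only [roots, Finset.mem_filter, Finset.mem_univ, true_and]
    exact path_head_root C hl ((C.paths_are l hl).1)
  · intro l₁ hl₁ l₂ hl₂ hh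
    apply cover_unique_list C (Finset.mem_union_left _ hl₁) (Finset.mem_union_left _ hl₂)
      (List.head_mem _) (by rw [hh]; exact List.head_mem _)
  · intro v hv
    obtain ⟨l, hl, hne, hh⟩ := root_is_path_head C hv
    exact ⟨l, hl, hh⟩

end Stage4

section Stage5
variable {E : Finset (V × V)} {H : Finset V × Finset (V × V)}

theorem cycle_pred {F : Finset (V × V)} {l : List V} (hcyc : IsDiCycle F l) {w : V}
    (hw : w ∈ l) : ∃ u ∈ l, (u, w) ∈ F := by
  obtain ⟨hne, hnd, hch, hcl⟩ := hcyc
  obtain ⟨i, hi, hiv⟩ := List.mem_iff_getElem.1 hw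
  rcases Nat.eq_zero_or_pos i with rfl | hpos
  · refine ⟨l.getLast hne, List.getLast_mem hne, ?_⟩
    have : l.head hne = w := by rw [head_eq_getElem', hiv]
    rw [← this]
    exact hcl
  · refine ⟨l[i-1], List.getElem_mem _, ?_⟩
    have h1 : (i - 1) + 1 < l.length := by omega
    have := chain_edge_mem h1
    have h2 : l[(i-1)+1] = w := by
      simp only [show i - 1 + 1 = i from by omega]
      exact hiv
    rw [h2] at this
    exact chainEdges_rel hch this

theorem necklace_root_reaches (hH : IsNecklace E H) {v : V} (hv : v ∈ H.1)
    (hroot : indeg H.2 v = 0) {w : V} (hw : w ∈ H.1) :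
    Relation.ReflTransGen (fun x y => (x, y) ∈ H.2) v w := by
  obtain ⟨hne, hsub, hends, hconn, hdeg⟩ := hH
  have h := hconn v hv w hw
  clear hw
  induction h with
  | refl => exact .refl
  | tail h1 h2 ih =>
    rcases h2 with h2 | h2
    · exact ih.tail h2
    · rename_i b c
      rcases Relation.ReflTransGen.cases_tail ih with heq | ⟨u, hdir, hu⟩
      · exfalso
        rw [heq] at h2
        have h3 : 1 ≤ indeg H.2 v := indeg_pos_of_mem h2
        omega
      · have hb : b ∈ H.1 := (hends _ h2).2
        have huc : u = c := indeg_le_one_unique (hdeg b hb) hu h2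
        exact huc ▸ hdir

theorem necklace_open_of_root (hH : IsNecklace E H) {v : V} (hv : v ∈ H.1)
    (hroot : indeg H.2 v = 0) : ¬ IsClosedNecklace H := by
  rintro ⟨l, hcyc⟩
  obtain ⟨hne', hsub, hends, hconn, hdeg⟩ := hH
  have hlne : l ≠ [] := hcyc.1
  have claim : ∀ w, Relation.ReflTransGen (fun x y => (x, y) ∈ H.2) v w → w ∉ l := by
    intro w hw
    induction hw with
    | refl =>
      intro hvl
      obtain ⟨u, _, hu⟩ := cycle_pred hcyc hvl
      have h3 : 1 ≤ indeg H.2 v := indeg_pos_of_mem hu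
      omega
    | tail h1 h2 ih =>
      rename_i b c
      intro hcl
      obtain ⟨u, hul, hu⟩ := cycle_pred hcyc hcl
      have hc : c ∈ H.1 := (hends _ h2).2
      have : u = b := indeg_le_one_unique (hdeg c hc) hu h2
      exact ih (this ▸ hul)
  have hhead : l.head hlne ∈ H.1 := by
    have : (l.getLast hlne, l.head hlne) ∈ H.2 := hcyc.2.2.2
    exact (hends _ this).2
  exact claim _ (necklace_root_reaches ⟨hne', hsub, hends, hconn, hdeg⟩ hv hroot hhead)
    (List.head_mem hlne)

theorem necklace_root_unique (hH : IsNecklace E H) {v v' : V} (hv : v ∈ H.1)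
    (hroot : indeg H.2 v = 0) (hv' : v' ∈ H.1) (hroot' : indeg H.2 v' = 0) : v = v' := by
  have := necklace_root_reaches hH hv hroot hv'
  rcases Relation.ReflTransGen.cases_tail this with heq | ⟨u, _, hu⟩
  · exact heq.symm
  · exfalso
    have h3 : 1 ≤ indeg H.2 v' := indeg_pos_of_mem hu
    omega

theorem necklace_closed_of_no_root (hH : IsNecklace E H)
    (h : ∀ v ∈ H.1, indeg H.2 v ≠ 0) : IsClosedNecklace H := by
  obtain ⟨hne, hsub, hends, hconn, hdeg⟩ := hH
  have hpred : ∀ w : {x // x ∈ H.1}, ∃ u : {x // x ∈ H.1}, (u.val, w.val) ∈ H.2 := by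
    intro ⟨w, hw⟩
    have h1 : indeg H.2 w = 1 := le_antisymm (hdeg w hw) (by have := h w hw; omega)
    have h2 : (H.2.filter (fun e => e.2 = w)).Nonempty := by
      rw [← Finset.card_pos, ← indeg]; omega
    obtain ⟨e, he⟩ := h2
    rw [Finset.mem_filter] at he
    refine ⟨⟨e.1, (hends e he.1).1⟩, ?_⟩
    have h5 : (e.1, e.2) ∈ H.2 := he.1
    rw [he.2] at h5
    exact h5
  choose f hf using hpred
  obtain ⟨v₀, hv₀⟩ := hne
  set x : {x // x ∈ H.1} := ⟨v₀, hv₀⟩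
  -- find a periodic point
  have hper : ∃ y : {x // x ∈ H.1}, ∃ m, 0 < m ∧ f^[m] y = y := by
    obtain ⟨i, j, hij, hfe⟩ := Fintype.exists_ne_map_eq_of_card_lt
      (fun i : Fin (Fintype.card {x // x ∈ H.1} + 1) => f^[i.val] x) (by simp)
    rcases Nat.lt_or_ge i.val j.val with hlt | hge
    · refine ⟨f^[i.val] x, j.val - i.val, by omega, ?_⟩
      rw [← Function.iterate_add_apply, show j.val - i.val + i.val = j.val from by omega, hfe]
    · have hlt : j.val < i.val := by
        rcases Nat.lt_or_ge j.val i.val with h' | h'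
        · exact h'
        · exact absurd (Fin.ext (by omega)) hij
      refine ⟨f^[j.val] x, i.val - j.val, by omega, ?_⟩
      rw [← Function.iterate_add_apply, show i.val - j.val + j.val = i.val from by omega, ← hfe]
  obtain ⟨y, m0, hm0, hym0⟩ := hper
  have hyper : y ∈ Function.periodicPts f := ⟨m0, hm0, hym0⟩
  set m := Function.minimalPeriod f y with hm
  have hmpos : 0 < m := Function.minimalPeriod_pos_of_mem_periodicPts hyper
  have hfix : f^[m] y = y := Function.isPeriodicPt_minimalPeriod f y
  have hinj := Function.iterate_injOn_Iio_minimalPeriod (f := f) (x := y)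
  set g : ℕ → V := fun i => (f^[m - 1 - i] y).val with hg
  refine ⟨(List.range m).map g, ?_, ?_, ?_, ?_⟩
  · simp [hmpos.ne']
  · apply List.Nodup.map_on ?_ List.nodup_range
    intro i hi j hj hgij
    simp only [List.mem_range] at hi hj
    have : f^[m - 1 - i] y = f^[m - 1 - j] y := Subtype.ext hgij
    have := hinj (by simp; omega) (by simp; omega) this
    omega
  · refine List.isChain_iff_getElem.2 ?_
    intro i hilen
    simp only [List.get_eq_getElem, List.getElem_map, List.getElem_range, List.length_map,
      List.length_range] at hilen ⊢
    have h1 : m - 1 - i = (m - 1 - (i + 1)) + 1 := by omega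
    rw [hg]
    simp only
    rw [h1]
    have h2 : f^[(m - 1 - (i+1)) + 1] y = f (f^[m - 1 - (i+1)] y) :=
      Function.iterate_succ_apply' f _ y
    rw [h2]
    exact hf _
  · have hlen : ((List.range m).map g).length = m := by simp
    rw [getLast_eq_getElem', head_eq_getElem']
    simp only [List.getElem_map, List.getElem_range, hlen]
    rw [hg]
    simp only
    rw [show m - 1 - (m - 1) = 0 from by omega]
    simp only [Function.iterate_zero_apply, Nat.sub_zero]
    have h3 : f (f^[m - 1] y) = y := by
      have h4 := (Function.iterate_succ_apply' f (m - 1) y).symm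
      rw [show (m - 1).succ = m from by omega] at h4
      rw [h4, hfix]
    have h5 := hf (f^[m - 1] y)
    rw [h3] at h5
    exact h5

theorem necklace_root_filter_card [Fintype V] (hH : IsNecklace E H) :
    (H.1.filter (fun v => indeg H.2 v = 0)).card = if IsClosedNecklace H then 0 else 1 := by
  split
  · rename_i hcl
    rw [Finset.card_eq_zero, Finset.filter_eq_empty_iff]
    intro v hv hroot
    exact necklace_open_of_root hH hv hroot hcl
  · rename_i hop
    have : ∃ v ∈ H.1, indeg H.2 v = 0 := by
      by_contra hno
      push_neg at hno
      exact hop (necklace_closed_of_no_root hH hno)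
    obtain ⟨v, hv, hroot⟩ := this
    rw [Finset.card_eq_one]
    refine ⟨v, ?_⟩
    ext w
    simp only [Finset.mem_filter, Finset.mem_singleton]
    constructor
    · rintro ⟨hw, hwroot⟩
      exact (necklace_root_unique hH hv hroot hw hwroot).symm
    · rintro rfl
      exact ⟨hv, hroot⟩

end Stage5

section Stage6
variable {E : Finset (V × V)} {D : Finset (Finset V × Finset (V × V))}

theorem cover_unique_necklace (hD : IsNecklaceCover E D) {H₁ H₂ : Finset V × Finset (V × V)}
    (h₁ : H₁ ∈ D) (h₂ : H₂ ∈ D) {v : V} (hv₁ : v ∈ H₁.1) (hv₂ : v ∈ H₂.1) : H₁ = H₂ := by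
  by_contra hne
  exact Finset.disjoint_left.1 (hD.2.1 H₁ h₁ H₂ h₂ hne) hv₁ hv₂

theorem coverE_subset (hD : IsNecklaceCover E D) : D.biUnion Prod.snd ⊆ E := by
  intro e he
  obtain ⟨H, hH, he⟩ := Finset.mem_biUnion.1 he
  exact (hD.1 H hH).2.1 he

theorem coverE_filter_in (hD : IsNecklaceCover E D) {H : Finset V × Finset (V × V)}
    (hH : H ∈ D) {v : V} (hv : v ∈ H.1) :
    (D.biUnion Prod.snd).filter (fun e => e.2 = v) = H.2.filter (fun e => e.2 = v) := by
  ext e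
  simp only [Finset.mem_filter, Finset.mem_biUnion]
  constructor
  · rintro ⟨⟨H', hH', he⟩, hev⟩
    have hv' : e.2 ∈ H'.1 := ((hD.1 H' hH').2.2.1 e he).2
    rw [hev] at hv'
    have := cover_unique_necklace hD hH' hH hv' hv
    subst this
    exact ⟨he, hev⟩
  · rintro ⟨he, hev⟩
    exact ⟨⟨H, hH, he⟩, hev⟩

theorem coverE_filter_out (hD : IsNecklaceCover E D) {H : Finset V × Finset (V × V)}
    (hH : H ∈ D) {v : V} (hv : v ∈ H.1) :
    (D.biUnion Prod.snd).filter (fun e => e.1 = v) = H.2.filter (fun e => e.1 = v) := by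
  ext e
  simp only [Finset.mem_filter, Finset.mem_biUnion]
  constructor
  · rintro ⟨⟨H', hH', he⟩, hev⟩
    have hv' : e.1 ∈ H'.1 := ((hD.1 H' hH').2.2.1 e he).1
    rw [hev] at hv'
    have := cover_unique_necklace hD hH' hH hv' hv
    subst this
    exact ⟨he, hev⟩
  · rintro ⟨he, hev⟩
    exact ⟨⟨H, hH, he⟩, hev⟩

theorem coverE_indeg_eq (hD : IsNecklaceCover E D) {H : Finset V × Finset (V × V)}
    (hH : H ∈ D) {v : V} (hv : v ∈ H.1) :
    indeg (D.biUnion Prod.snd) v = indeg H.2 v := by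
  rw [indeg, indeg, coverE_filter_in hD hH hv]

theorem coverE_outdeg_eq (hD : IsNecklaceCover E D) {H : Finset V × Finset (V × V)}
    (hH : H ∈ D) {v : V} (hv : v ∈ H.1) :
    outdeg (D.biUnion Prod.snd) v = outdeg H.2 v := by
  rw [outdeg, outdeg, coverE_filter_out hD hH hv]

theorem coverE_indeg_le_one (hD : IsNecklaceCover E D) (v : V) :
    indeg (D.biUnion Prod.snd) v ≤ 1 := by
  obtain ⟨H, hH, hv⟩ := hD.2.2 v
  rw [coverE_indeg_eq hD hH hv]
  exact (hD.1 H hH).2.2.2.2 v hv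

theorem coverE_numOpen [Fintype V] (hD : IsNecklaceCover E D) :
    numOpen D = (roots (D.biUnion Prod.snd)).card := by
  have hsets : roots (D.biUnion Prod.snd)
      = D.biUnion (fun H => H.1.filter (fun v => indeg (D.biUnion Prod.snd) v = 0)) := by
    ext v
    simp only [roots, Finset.mem_filter, Finset.mem_univ, true_and, Finset.mem_biUnion]
    constructor
    · intro h
      obtain ⟨H, hH, hv⟩ := hD.2.2 v
      exact ⟨H, hH, hv, h⟩
    · rintro ⟨H, hH, hv, h⟩
      exact h
  rw [hsets, Finset.card_biUnion]
  · have : ∀ H ∈ D, (H.1.filter (fun v => indeg (D.biUnion Prod.snd) v = 0)).card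
        = if IsClosedNecklace H then 0 else 1 := by
      intro H hH
      have : H.1.filter (fun v => indeg (D.biUnion Prod.snd) v = 0)
          = H.1.filter (fun v => indeg H.2 v = 0) := by
        apply Finset.filter_congr
        intro v hv
        rw [coverE_indeg_eq hD hH hv]
      rw [this]
      exact necklace_root_filter_card (hD.1 H hH)
    rw [Finset.sum_congr rfl this]
    rw [numOpen]
    rw [Finset.card_filter]
    apply Finset.sum_congr rfl
    intro H _
    by_cases h : IsClosedNecklace H <;> simp [h]
  · intro H₁ h₁ H₂ h₂ hne
    exact Finset.disjoint_filter_filter (hD.2.1 H₁ h₁ H₂ h₂ hne)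

theorem coverE_numSinks [Fintype V] (hD : IsNecklaceCover E D) :
    numSinks D = (sinks (D.biUnion Prod.snd)).card := by
  have hsets : sinks (D.biUnion Prod.snd)
      = D.biUnion (fun H => H.1.filter (fun v => outdeg (D.biUnion Prod.snd) v = 0)) := by
    ext v
    simp only [sinks, Finset.mem_filter, Finset.mem_univ, true_and, Finset.mem_biUnion]
    constructor
    · intro h
      obtain ⟨H, hH, hv⟩ := hD.2.2 v
      exact ⟨H, hH, hv, h⟩
    · rintro ⟨H, hH, hv, h⟩
      exact h
  rw [hsets, Finset.card_biUnion]
  · rw [numSinks]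
    apply Finset.sum_congr rfl
    intro H hH
    congr 1
    apply Finset.filter_congr
    intro v hv
    rw [coverE_outdeg_eq hD hH hv]
  · intro H₁ h₁ H₂ h₂ hne
    exact Finset.disjoint_filter_filter (hD.2.1 H₁ h₁ H₂ h₂ hne)

end Stage6

section Stage7a
variable {E : Finset (V × V)}

theorem pcE_close {P Q : Finset (List V)} {l : List V} (hl : l ∈ P) :
    pcE (P.erase l) (insert l Q) = pcE P Q ∪ closeEdge l := by
  ext p
  simp only [pcE, Finset.mem_union, Finset.mem_biUnion, Finset.mem_erase, Finset.mem_insert]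
  constructor
  · rintro (⟨m, ⟨hml, hmP⟩, hp⟩ | ⟨m, (rfl | hmQ), hp⟩)
    · exact Or.inl (Or.inl ⟨m, hmP, hp⟩)
    · rcases hp with hp | hp
      · exact Or.inl (Or.inl ⟨m, hl, hp⟩)
      · exact Or.inr hp
    · exact Or.inl (Or.inr ⟨m, hmQ, hp⟩)
  · rintro ((⟨m, hmP, hp⟩ | ⟨m, hmQ, hp⟩) | hp)
    · by_cases hm : m = l
      · subst hm
        exact Or.inr ⟨m, Or.inl rfl, Or.inl hp⟩
      · exact Or.inl ⟨m, ⟨hm, hmP⟩, hp⟩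
    · exact Or.inr ⟨m, Or.inr hmQ, hp⟩
    · exact Or.inr ⟨l, Or.inl rfl, Or.inr hp⟩

theorem pcE_concat {P Q : Finset (List V)} {l l' : List V} (hl : l ∈ P) (hl' : l' ∈ P)
    (h1 : l ≠ []) (h2 : l' ≠ []) :
    pcE (insert (l ++ l') ((P.erase l).erase l')) Q
      = insert (l.getLast h1, l'.head h2) (pcE P Q) := by
  ext p
  simp only [pcE, Finset.mem_union, Finset.mem_biUnion, Finset.mem_insert, Finset.mem_erase]
  constructor
  · rintro (⟨m, (rfl | ⟨hml', hml, hmP⟩), hp⟩ | ⟨m, hmQ, hp⟩)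
    · rw [chainEdges_append h1 h2] at hp
      rcases Finset.mem_insert.1 hp with rfl | hp
      · exact Or.inl rfl
      · rcases Finset.mem_union.1 hp with hp | hp
        · exact Or.inr (Or.inl ⟨l, hl, hp⟩)
        · exact Or.inr (Or.inl ⟨l', hl', hp⟩)
    · exact Or.inr (Or.inl ⟨m, hmP, hp⟩)
    · exact Or.inr (Or.inr ⟨m, hmQ, hp⟩)
  · rintro (rfl | (⟨m, hmP, hp⟩ | ⟨m, hmQ, hp⟩))
    · refine Or.inl ⟨l ++ l', Or.inl rfl, ?_⟩
      rw [chainEdges_append h1 h2]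
      exact Finset.mem_insert_self _ _
    · by_cases hm1 : m = l
      · subst hm1
        refine Or.inl ⟨m ++ l', Or.inl rfl, ?_⟩
        rw [chainEdges_append h1 h2]
        exact Finset.mem_insert_of_mem (Finset.mem_union_left _ hp)
      · by_cases hm2 : m = l'
        · subst hm2
          refine Or.inl ⟨l ++ m, Or.inl rfl, ?_⟩
          rw [chainEdges_append h1 h2]
          exact Finset.mem_insert_of_mem (Finset.mem_union_right _ hp)
        · exact Or.inl ⟨m, Or.inr ⟨hm2, hm1, hmP⟩, hp⟩
    · exact Or.inr ⟨m, hmQ, hp⟩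

theorem sink_is_path_last (C : PCCover E) {a : V} {l : List V}
    (hl : l ∈ C.paths ∪ C.cycles) (ha : a ∈ l)
    (hout : ∀ x, (a, x) ∉ pcE C.paths C.cycles) :
    ∃ hp : l ∈ C.paths, ∃ hne : l ≠ [], l.getLast hne = a := by
  obtain ⟨i, hi, hia⟩ := List.mem_iff_getElem.1 ha
  have hne : l ≠ [] := by intro h; subst h; simp at hi
  have hchain : ¬ (i + 1 < l.length) := by
    intro hlt
    have hedge := chain_edge_mem hlt
    have hmem : (l[i], l[i+1]) ∈ pcE C.paths C.cycles := by
      rcases Finset.mem_union.1 hl with h | h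
      · exact chainEdges_subset_pcE_paths h hedge
      · exact chainEdges_subset_pcE_cycles h (Finset.mem_union_left _ hedge)
    rw [hia] at hmem
    exact hout _ hmem
  have hil : i = l.length - 1 := by omega
  have hlast : l.getLast hne = a := by
    rw [getLast_eq_getElem']
    simp only [← hil]
    exact hia
  rcases Finset.mem_union.1 hl with h | h
  · exact ⟨h, hne, hlast⟩
  · exfalso
    have hmem : (l.getLast hne, l.head hne) ∈ pcE C.paths C.cycles := by
      apply chainEdges_subset_pcE_cycles h
      rw [closeEdge_eq hne]
      exact Finset.mem_union_right _ (Finset.mem_singleton_self _)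
    rw [hlast] at hmem
    exact hout _ hmem

theorem source_is_path_head (C : PCCover E) {b : V} {l : List V}
    (hl : l ∈ C.paths ∪ C.cycles) (hb : b ∈ l)
    (hin : ∀ x, (x, b) ∉ pcE C.paths C.cycles) :
    ∃ hp : l ∈ C.paths, ∃ hne : l ≠ [], l.head hne = b := by
  obtain ⟨i, hi, hib⟩ := List.mem_iff_getElem.1 hb
  have hne : l ≠ [] := by intro h; subst h; simp at hi
  have hzero : i = 0 := by
    by_contra h0
    have h1 : (i - 1) + 1 < l.length := by omega
    have hedge := chain_edge_mem h1
    have hmem : (l[i-1], l[(i-1)+1]) ∈ pcE C.paths C.cycles := by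
      rcases Finset.mem_union.1 hl with h | h
      · exact chainEdges_subset_pcE_paths h hedge
      · exact chainEdges_subset_pcE_cycles h (Finset.mem_union_left _ hedge)
    have h2 : l[(i-1)+1] = b := by
      simp only [show i - 1 + 1 = i from by omega]
      exact hib
    rw [h2] at hmem
    exact hin _ hmem
  subst hzero
  have hhead : l.head hne = b := by rw [head_eq_getElem', hib]
  rcases Finset.mem_union.1 hl with h | h
  · exact ⟨h, hne, hhead⟩
  · exfalso
    have hmem : (l.getLast hne, l.head hne) ∈ pcE C.paths C.cycles := by
      apply chainEdges_subset_pcE_cycles h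
      rw [closeEdge_eq hne]
      exact Finset.mem_union_right _ (Finset.mem_singleton_self _)
    rw [hhead] at hmem
    exact hin _ hmem

end Stage7a

section Stage7b
variable {E : Finset (V × V)}

theorem B2 [Fintype V] (F : Finset (V × V)) :
    F ⊆ E → (∀ v, indeg F v ≤ 1) → (∀ v, outdeg F v ≤ 1) →
    ∃ C : PCCover E, pcE C.paths C.cycles = F ∧ C.paths.card + F.card = Fintype.card V := by
  induction F using Finset.strongInduction with
  | _ F ih =>
    intro hFE hin hout
    rcases Finset.eq_empty_or_nonempty F with rfl | ⟨e, he⟩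
    · refine ⟨⟨Finset.univ.image (fun v => [v]), ∅, ?_, ?_, ?_, ?_, ?_⟩, ?_, ?_⟩
      · intro m hm
        obtain ⟨v, -, rfl⟩ := Finset.mem_image.1 hm
        exact ⟨by simp, by simp, List.isChain_singleton _⟩
      · intro m hm
        simp at hm
      · exact Finset.disjoint_empty_right _
      · intro l₁ h₁ l₂ h₂ hne v hv
        simp only [Finset.union_empty, Finset.mem_image, Finset.mem_univ, true_and] at h₁ h₂
        obtain ⟨v₁, rfl⟩ := h₁
        obtain ⟨v₂, rfl⟩ := h₂
        simp only [List.mem_singleton] at hv ⊢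
        subst hv
        intro hv2
        exact hne (by rw [hv2])
      · intro v
        refine ⟨[v], ?_, by simp⟩
        exact Finset.mem_union_left _ (Finset.mem_image.2 ⟨v, Finset.mem_univ _, rfl⟩)
      · rw [Finset.eq_empty_iff_forall_notMem]
        intro p hp
        rcases Finset.mem_union.1 hp with hp | hp
        · obtain ⟨m, hm, hp⟩ := Finset.mem_biUnion.1 hp
          obtain ⟨v, -, rfl⟩ := Finset.mem_image.1 hm
          rw [chainEdges_singleton] at hp
          simp at hp
        · simp at hp
      · simp only [Finset.card_empty, Nat.add_zero]
        rw [Finset.card_image_of_injective _ (fun v w h => by simpa using h)]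
        simp
    · obtain ⟨a, b⟩ := e
      have hsub' : F.erase (a, b) ⊆ F := Finset.erase_subset _ _
      obtain ⟨C, hCE, hCcard⟩ := ih (F.erase (a, b)) (Finset.erase_ssubset he)
        (hsub'.trans hFE) (fun v => (indeg_mono hsub' v).trans (hin v))
        (fun v => (outdeg_mono hsub' v).trans (hout v))
      have houtA : ∀ x, (a, x) ∉ pcE C.paths C.cycles := by
        intro x hx
        rw [hCE] at hx
        have hxF : (a, x) ∈ F := hsub' hx
        have : x = b := outdeg_le_one_unique (hout a) hxF he
        subst this
        exact (Finset.notMem_erase _ _) hx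
      have hinB : ∀ x, (x, b) ∉ pcE C.paths C.cycles := by
        intro x hx
        rw [hCE] at hx
        have hxF : (x, b) ∈ F := hsub' hx
        have : x = a := indeg_le_one_unique (hin b) hxF he
        subst this
        exact (Finset.notMem_erase _ _) hx
      obtain ⟨l, hlmem, hal⟩ := C.covers a
      obtain ⟨l', hlmem', hbl'⟩ := C.covers b
      obtain ⟨hlp, hlne, hlast⟩ := sink_is_path_last C hlmem hal houtA
      obtain ⟨hlp', hlne', hhead⟩ := source_is_path_head C hlmem' hbl' hinB
      by_cases hll : l = l'
      · -- close the path l into a cycle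
        subst hll
        have hlast2 : l.getLast hlne = a := hlast
        have hhead2 : l.head hlne = b := hhead
        have hcyc : IsDiCycle E l := by
          refine ⟨hlne, (C.paths_are l hlp).2.1, (C.paths_are l hlp).2.2, ?_⟩
          rw [hlast2, hhead2]
          exact hFE he
        have hU : C.paths.erase l ∪ insert l C.cycles = C.paths ∪ C.cycles := by
          ext m
          simp only [Finset.mem_union, Finset.mem_erase, Finset.mem_insert]
          constructor
          · rintro (⟨-, h⟩ | (rfl | h))
            · exact Or.inl h
            · exact Or.inl hlp
            · exact Or.inr h
          · rintro (h | h)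
            · by_cases hm : m = l
              · exact Or.inr (Or.inl hm)
              · exact Or.inl ⟨hm, h⟩
            · exact Or.inr (Or.inr h)
        refine ⟨⟨C.paths.erase l, insert l C.cycles, ?_, ?_, ?_, ?_, ?_⟩, ?_, ?_⟩
        · intro m hm
          exact C.paths_are m (Finset.mem_of_mem_erase hm)
        · intro m hm
          rcases Finset.mem_insert.1 hm with rfl | hm
          · exact hcyc
          · exact C.cycles_are m hm
        · rw [Finset.disjoint_left]
          intro m hm hm'
          rcases Finset.mem_insert.1 hm' with rfl | hm'
          · exact (Finset.mem_erase.1 hm).1 rfl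
          · exact Finset.disjoint_left.1 C.disj (Finset.mem_of_mem_erase hm) hm'
        · intro l₁ h₁ l₂ h₂ hne v hv
          rw [hU] at h₁ h₂
          exact C.pairwiseDisj l₁ h₁ l₂ h₂ hne v hv
        · intro v
          rw [hU]
          exact C.covers v
        · rw [pcE_close hlp, hCE, closeEdge_eq hlne, hlast2, hhead2]
          rw [Finset.union_comm, ← Finset.insert_eq, Finset.insert_erase he]
        · show (C.paths.erase l).card + F.card = Fintype.card V
          have h1 := Finset.card_erase_of_mem hlp
          have h2 := Finset.card_erase_of_mem he
          have h3 : 1 ≤ C.paths.card := Finset.card_pos.2 ⟨l, hlp⟩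
          have h4 : 1 ≤ F.card := Finset.card_pos.2 ⟨(a, b), he⟩
          omega
      · -- concatenate l and l'
        have hdisjLL : ∀ v ∈ l, v ∉ l' := C.pairwiseDisj l hlmem l' hlmem' hll
        have hLne : l ++ l' ≠ [] := by simp [hlne]
        have hLnodup : (l ++ l').Nodup := by
          rw [List.nodup_append]
          exact ⟨(C.paths_are l hlp).2.1, (C.paths_are l' hlp').2.1,
            fun v hv w hw hvw => hdisjLL v hv (hvw ▸ hw)⟩
        have hLchain : (l ++ l').Chain' (fun u v => (u, v) ∈ E) := by
          apply List.IsChain.append (C.paths_are l hlp).2.2 (C.paths_are l' hlp').2.2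
          intro x hx y hy
          rw [List.getLast?_eq_getLast hlne, Option.mem_def, Option.some_inj] at hx
          rw [List.head?_eq_head hlne', Option.mem_def, Option.some_inj] at hy
          rw [← hx, ← hy, hlast, hhead]
          exact hFE he
        have hIsPath : IsDiPath E (l ++ l') := ⟨hLne, hLnodup, hLchain⟩
        have hlp'' : l' ∈ C.paths.erase l := Finset.mem_erase.2 ⟨Ne.symm hll, hlp'⟩
        have haL : a ∈ l ++ l' := List.mem_append_left _ hal
        have hbL : b ∈ l ++ l' := List.mem_append_right _ hbl'
        have hLnel : l ++ l' ≠ l := by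
          intro h
          exact hdisjLL b (h ▸ hbL) hbl'
        have hLnew : l ++ l' ∉ (C.paths.erase l).erase l' := by
          intro hmem
          have hLpc : l ++ l' ∈ C.paths ∪ C.cycles :=
            Finset.mem_union_left _ (Finset.mem_of_mem_erase (Finset.mem_of_mem_erase hmem))
          exact C.pairwiseDisj (l ++ l') hLpc l hlmem hLnel a haL hal
        have hUmem : ∀ m, m ∈ insert (l ++ l') ((C.paths.erase l).erase l') ∪ C.cycles ↔
            (m = l ++ l' ∨ (m ∈ C.paths ∪ C.cycles ∧ m ≠ l ∧ m ≠ l')) := by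
          intro m
          simp only [Finset.mem_union, Finset.mem_insert, Finset.mem_erase]
          constructor
          · rintro ((rfl | ⟨h1, h2, h3⟩) | h)
            · exact Or.inl rfl
            · exact Or.inr ⟨Or.inl h3, h2, h1⟩
            · refine Or.inr ⟨Or.inr h, ?_, ?_⟩
              · rintro rfl
                exact Finset.disjoint_left.1 C.disj hlp h
              · rintro rfl
                exact Finset.disjoint_left.1 C.disj hlp' h
          · rintro (rfl | ⟨h, h2, h3⟩)
            · exact Or.inl (Or.inl rfl)
            · rcases h with h | h
              · exact Or.inl (Or.inr ⟨h3, h2, h⟩)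
              · exact Or.inr h
        refine ⟨⟨insert (l ++ l') ((C.paths.erase l).erase l'), C.cycles, ?_, C.cycles_are,
          ?_, ?_, ?_⟩, ?_, ?_⟩
        · intro m hm
          rcases Finset.mem_insert.1 hm with rfl | hm
          · exact hIsPath
          · exact C.paths_are m (Finset.mem_of_mem_erase (Finset.mem_of_mem_erase hm))
        · rw [Finset.disjoint_left]
          intro m hm hm'
          rcases Finset.mem_insert.1 hm with rfl | hm
          · exact C.pairwiseDisj (l ++ l') (Finset.mem_union_right _ hm') l hlmem hLnel a haL hal
          · exact Finset.disjoint_left.1 C.disj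
              (Finset.mem_of_mem_erase (Finset.mem_of_mem_erase hm)) hm'
        · intro m₁ h₁ m₂ h₂ hne v hv
          rw [hUmem] at h₁ h₂
          rcases h₁ with rfl | ⟨h₁, h₁l, h₁l'⟩
          · rcases h₂ with rfl | ⟨h₂, h₂l, h₂l'⟩
            · exact absurd rfl hne
            · intro hv2
              rcases List.mem_append.1 hv with hvl | hvl
              · exact C.pairwiseDisj l hlmem m₂ h₂ (Ne.symm h₂l) v hvl hv2
              · exact C.pairwiseDisj l' hlmem' m₂ h₂ (Ne.symm h₂l') v hvl hv2
          · rcases h₂ with rfl | ⟨h₂, h₂l, h₂l'⟩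
            · intro hv2
              rcases List.mem_append.1 hv2 with hvl | hvl
              · exact C.pairwiseDisj m₁ h₁ l hlmem h₁l v hv hvl
              · exact C.pairwiseDisj m₁ h₁ l' hlmem' h₁l' v hv hvl
            · exact C.pairwiseDisj m₁ h₁ m₂ h₂ hne v hv
        · intro v
          obtain ⟨m, hm, hvm⟩ := C.covers v
          by_cases hm1 : m = l
          · exact ⟨l ++ l', Finset.mem_union_left _ (Finset.mem_insert_self _ _),
              List.mem_append_left _ (hm1 ▸ hvm)⟩
          · by_cases hm2 : m = l'
            · exact ⟨l ++ l', Finset.mem_union_left _ (Finset.mem_insert_self _ _),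
                List.mem_append_right _ (hm2 ▸ hvm)⟩
            · refine ⟨m, ?_, hvm⟩
              rw [hUmem m]
              exact Or.inr ⟨hm, hm1, hm2⟩
        · rw [pcE_concat hlp hlp' hlne hlne', hCE]
          have h1 : (l.getLast hlne, l'.head hlne') = (a, b) := by rw [hlast, hhead]
          rw [h1, Finset.insert_erase he]
        · show (insert (l ++ l') ((C.paths.erase l).erase l')).card + F.card = Fintype.card V
          have hcard1 : (insert (l ++ l') ((C.paths.erase l).erase l')).card
              = ((C.paths.erase l).erase l').card + 1 := Finset.card_insert_of_notMem hLnew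
          have hcard2 := Finset.card_erase_of_mem hlp''
          have hcard3 := Finset.card_erase_of_mem hlp
          have hF1 := Finset.card_erase_of_mem he
          have hps : 2 ≤ C.paths.card := Finset.one_lt_card.2 ⟨l, hlp, l', hlp', hll⟩
          have hFpos : 1 ≤ F.card := Finset.card_pos.2 ⟨(a, b), he⟩
          omega

end Stage7b

section Stage8
variable [Fintype V] {E F : Finset (V × V)}

noncomputable def wcomp (F : Finset (V × V)) (v : V) [Fintype V] : Finset V :=
  Finset.univ.filter (fun w => WReach F v w)

theorem wreach_symm {a b : V} (h : WReach F a b) : WReach F b a :=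
  by
    induction h with
    | refl => exact Relation.ReflTransGen.refl
    | tail _ hxy ih => exact Relation.ReflTransGen.head hxy.symm ih

theorem mem_wcomp_self (v : V) : v ∈ wcomp F v := by
  simp only [wcomp, Finset.mem_filter, Finset.mem_univ, true_and]
  exact Relation.ReflTransGen.refl

theorem mem_wcomp_iff {u v : V} : v ∈ wcomp F u ↔ WReach F u v := by
  simp [wcomp]

theorem wcomp_eq {u v : V} (h : WReach F u v) : wcomp F u = wcomp F v := by
  ext w
  simp only [mem_wcomp_iff]
  exact ⟨fun h' => (wreach_symm h).trans h', fun h' => h.trans h'⟩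

theorem wcomp_edge {e : V × V} (he : e ∈ F) {v : V} :
    e.1 ∈ wcomp F v ↔ e.2 ∈ wcomp F v := by
  simp only [mem_wcomp_iff]
  constructor
  · intro h
    exact h.tail (Or.inl (by simpa using he))
  · intro h
    exact h.tail (Or.inr (by simpa using he))

theorem wreach_restrict {v a b : V} (ha : a ∈ wcomp F v) (hab : WReach F a b) :
    Relation.ReflTransGen (fun x y =>
      (x, y) ∈ F.filter (fun e => e.1 ∈ wcomp F v) ∨
      (y, x) ∈ F.filter (fun e => e.1 ∈ wcomp F v)) a b := by
  induction hab with
  | refl => exact Relation.ReflTransGen.refl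
  | tail h1 h2 ih =>
    rename_i w' w
    have hw' : w' ∈ wcomp F v := by
      rw [mem_wcomp_iff] at ha ⊢
      exact ha.trans h1
    rcases h2 with h2 | h2
    · refine ih.tail (Or.inl ?_)
      rw [Finset.mem_filter]
      exact ⟨h2, hw'⟩
    · refine ih.tail (Or.inr ?_)
      rw [Finset.mem_filter]
      refine ⟨h2, ?_⟩
      show w ∈ wcomp F v
      rw [mem_wcomp_iff] at hw' ⊢
      exact hw'.tail (Or.inr h2)

theorem components_cover (hFE : F ⊆ E) (hin : ∀ v, indeg F v ≤ 1) :
    ∃ D : Finset (Finset V × Finset (V × V)), IsNecklaceCover E D ∧ D.biUnion Prod.snd = F := by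
  refine ⟨Finset.univ.image (fun v => (wcomp F v, F.filter (fun e => e.1 ∈ wcomp F v))),
    ⟨?_, ?_, ?_⟩, ?_⟩
  · rintro H hH
    obtain ⟨v, -, rfl⟩ := Finset.mem_image.1 hH
    refine ⟨⟨v, mem_wcomp_self v⟩, ?_, ?_, ?_, ?_⟩
    · exact (Finset.filter_subset _ _).trans hFE
    · intro e he
      rw [Finset.mem_filter] at he
      exact ⟨he.2, (wcomp_edge he.1).1 he.2⟩
    · intro a ha b hb
      simp only [mem_wcomp_iff] at ha hb
      exact wreach_restrict (mem_wcomp_iff.2 ha) ((wreach_symm ha).trans hb)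
    · intro w hw
      exact (indeg_mono (Finset.filter_subset _ _) w).trans (hin w)
  · rintro H₁ h₁ H₂ h₂ hne
    obtain ⟨u, -, rfl⟩ := Finset.mem_image.1 h₁
    obtain ⟨w, -, rfl⟩ := Finset.mem_image.1 h₂
    rw [Finset.disjoint_left]
    intro x hx hx'
    apply hne
    have h3 : wcomp F u = wcomp F w := by
      rw [wcomp_eq (mem_wcomp_iff.1 hx), wcomp_eq (mem_wcomp_iff.1 hx')]
    rw [h3]
  · intro v
    exact ⟨(wcomp F v, F.filter (fun e => e.1 ∈ wcomp F v)),
      Finset.mem_image.2 ⟨v, Finset.mem_univ _, rfl⟩, mem_wcomp_self v⟩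
  · ext e
    simp only [Finset.mem_biUnion, Finset.mem_image]
    constructor
    · rintro ⟨H, ⟨v, -, rfl⟩, he⟩
      exact (Finset.mem_filter.1 he).1
    · intro he
      refine ⟨(wcomp F e.1, F.filter (fun e' => e'.1 ∈ wcomp F e.1)),
        ⟨e.1, Finset.mem_univ _, rfl⟩, ?_⟩
      rw [Finset.mem_filter]
      exact ⟨he, mem_wcomp_self _⟩

end Stage8

section Stage9
variable {E F M : Finset (V × V)}

theorem select_tails (F : Finset (V × V)) :
    ∃ F' : Finset (V × V), F' ⊆ F ∧ (∀ v, outdeg F' v ≤ 1) ∧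
      F'.card = (F.image Prod.fst).card := by
  classical
  set sel : V → Finset (V × V) := fun u =>
    if h : (F.filter (fun e => e.1 = u)).Nonempty then {h.choose} else ∅ with hsel
  have hselmem : ∀ u, ∀ e ∈ sel u, e ∈ F ∧ e.1 = u := by
    intro u e he
    rw [hsel] at he
    simp only at he
    split at he
    · rename_i h
      rw [Finset.mem_singleton] at he
      subst he
      have := h.choose_spec
      rw [Finset.mem_filter] at this
      exact this
    · simp at he
  have hseluniq : ∀ u, ∀ e₁ ∈ sel u, ∀ e₂ ∈ sel u, e₁ = e₂ := by
    intro u e₁ h1 e₂ h2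
    rw [hsel] at h1 h2
    simp only at h1 h2
    split at h1
    · rename_i h
      rw [Finset.mem_singleton] at h1
      rw [dif_pos h, Finset.mem_singleton] at h2
      rw [h1, h2]
    · simp at h1
  refine ⟨(F.image Prod.fst).biUnion sel, ?_, ?_, ?_⟩
  · intro e he
    obtain ⟨u, hu, he⟩ := Finset.mem_biUnion.1 he
    exact (hselmem u e he).1
  · intro v
    apply outdeg_le_one_of_unique
    intro x y hx hy
    obtain ⟨u1, hu1, hx'⟩ := Finset.mem_biUnion.1 hx
    obtain ⟨u2, hu2, hy'⟩ := Finset.mem_biUnion.1 hy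
    have h1 : u1 = v := ((hselmem u1 _ hx').2).symm
    have h2 : u2 = v := ((hselmem u2 _ hy').2).symm
    have h12 : u1 = u2 := h1.trans h2.symm
    subst h12
    exact congrArg Prod.snd (hseluniq u1 _ hx' _ hy')
  · rw [Finset.card_biUnion]
    · have hselcard : ∀ u ∈ F.image Prod.fst, (sel u).card = 1 := by
        intro u hu
        have hne : (F.filter (fun e => e.1 = u)).Nonempty := by
          obtain ⟨e, he, heq⟩ := Finset.mem_image.1 hu
          exact ⟨e, Finset.mem_filter.2 ⟨he, heq⟩⟩
        rw [hsel]
        simp only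
        rw [dif_pos hne]
        simp
      rw [Finset.sum_congr rfl hselcard]
      simp
    · intro u1 h1 u2 h2 hne
      rw [Function.onFun, Finset.disjoint_left]
      intro e he1 he2
      exact hne (((hselmem u1 e he1).2).symm.trans (hselmem u2 e he2).2)

theorem extend_sheaf [Fintype V] (hME : M ⊆ E) (hin : ∀ v, indeg M v ≤ 1) :
    ∃ Fx : Finset (V × V), M ⊆ Fx ∧ Fx ⊆ E ∧ (∀ v, indeg Fx v ≤ 1) ∧
      (∀ v, indeg Fx v = 0 ↔ indeg E v = 0) := by
  classical
  set S := Finset.univ.filter (fun v => indeg E v ≠ 0 ∧ indeg M v = 0) with hS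
  set sel : V → Finset (V × V) := fun v =>
    if h : (E.filter (fun e => e.2 = v)).Nonempty then {h.choose} else ∅ with hsel
  have hselmem : ∀ u, ∀ e ∈ sel u, e ∈ E ∧ e.2 = u := by
    intro u e he
    rw [hsel] at he
    simp only at he
    split at he
    · rename_i h
      rw [Finset.mem_singleton] at he
      subst he
      have := h.choose_spec
      rw [Finset.mem_filter] at this
      exact this
    · simp at he
  have hseluniq : ∀ u, ∀ e₁ ∈ sel u, ∀ e₂ ∈ sel u, e₁ = e₂ := by
    intro u e₁ h1 e₂ h2
    rw [hsel] at h1 h2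
    simp only at h1 h2
    split at h1
    · rename_i h
      rw [Finset.mem_singleton] at h1
      rw [dif_pos h, Finset.mem_singleton] at h2
      rw [h1, h2]
    · simp at h1
  refine ⟨M ∪ S.biUnion sel, Finset.subset_union_left, ?_, ?_, ?_⟩
  · intro e he
    rcases Finset.mem_union.1 he with he | he
    · exact hME he
    · obtain ⟨u, hu, he⟩ := Finset.mem_biUnion.1 he
      exact (hselmem u e he).1
  · intro v
    apply indeg_le_one_of_unique
    intro x y hx hy
    have hkey : ∀ z : V, (z, v) ∈ S.biUnion sel → (z, v) ∈ sel v ∧ v ∈ S := by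
      intro z hz
      obtain ⟨u, hu, hz'⟩ := Finset.mem_biUnion.1 hz
      have : u = v := ((hselmem u _ hz').2).symm
      subst this
      exact ⟨hz', hu⟩
    rcases Finset.mem_union.1 hx with hx' | hx' <;> rcases Finset.mem_union.1 hy with hy' | hy'
    · exact indeg_le_one_unique (hin v) hx' hy'
    · exfalso
      obtain ⟨-, hvS⟩ := hkey y hy'
      rw [hS] at hvS
      have h0 := (Finset.mem_filter.1 hvS).2.2
      have h1 : 1 ≤ indeg M v := indeg_pos_of_mem hx'
      omega
    · exfalso
      obtain ⟨-, hvS⟩ := hkey x hx'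
      rw [hS] at hvS
      have h0 := (Finset.mem_filter.1 hvS).2.2
      have h1 : 1 ≤ indeg M v := indeg_pos_of_mem hy'
      omega
    · obtain ⟨hx'', -⟩ := hkey x hx'
      obtain ⟨hy'', -⟩ := hkey y hy'
      exact congrArg Prod.fst (hseluniq v _ hx'' _ hy'')
  · intro v
    constructor
    · intro h
      by_contra hE
      have hvS : v ∈ S ∨ indeg M v ≠ 0 := by
        by_cases hM : indeg M v = 0
        · exact Or.inl (Finset.mem_filter.2 ⟨Finset.mem_univ _, hE, hM⟩)
        · exact Or.inr hM
      rcases hvS with hvS | hM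
      · have hne : (E.filter (fun e => e.2 = v)).Nonempty := by
          rw [Finset.filter_nonempty_iff]
          by_contra hcon
          push_neg at hcon
          exact hE (indeg_eq_zero_iff.2 (fun e he => hcon e he))
        have hchoose : hne.choose ∈ sel v := by
          rw [hsel]
          simp only
          rw [dif_pos hne]
          exact Finset.mem_singleton_self _
        have hce := hne.choose_spec
        rw [Finset.mem_filter] at hce
        have hmem : hne.choose ∈ M ∪ S.biUnion sel :=
          Finset.mem_union_right _ (Finset.mem_biUnion.2 ⟨v, hvS, hchoose⟩)
        have := indeg_pos_of_mem hmem
        rw [hce.2] at this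
        omega
      · have := indeg_mono (Finset.subset_union_left : M ⊆ M ∪ S.biUnion sel) v
        omega
    · intro h
      have := indeg_mono (show M ∪ S.biUnion sel ⊆ E by
        intro e he
        rcases Finset.mem_union.1 he with he | he
        · exact hME he
        · obtain ⟨u, hu, he⟩ := Finset.mem_biUnion.1 he
          exact (hselmem u e he).1) v
      omega

end Stage9

theorem arith_lb {k r R S pmin : ℕ} (hk : 3 ≤ k) (hrR : r ≤ R) (hrp : r ≤ pmin)
    (hpS : pmin ≤ S) (hRS : R ≤ S) :
    (k-1)*r + 2*(pmin - r) ≤ (k-1)*R + 2*(S - R) := by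
  obtain ⟨a, rfl⟩ : ∃ a, R = r + a := ⟨R - r, by omega⟩
  rw [Nat.mul_add]
  have h3 : 2*a ≤ (k-1)*a := Nat.mul_le_mul_right _ (by omega)
  rw [Nat.add_assoc]
  apply Nat.add_le_add_left
  calc 2*(pmin - r) ≤ 2*a + 2*(S - (r+a)) := by omega
    _ ≤ (k-1)*a + 2*(S - (r+a)) := Nat.add_le_add_right h3 _

end Aux

theorem stmt18 [Fintype V] (E : Finset (V × V)) (k : ℕ) (hk : 3 ≤ k) (pmin : ℕ)
    (hp : IsLeast {m : ℕ | ∃ C : PCCover E, C.paths.card = m} pmin) :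
    IsLeast {m : ℕ | ∃ D : Finset (Finset V × Finset (V × V)),
        IsNecklaceCover E D ∧ (k - 1) * numOpen D + 2 * numLeaves D = m}
      ((k - 1) * (Finset.univ.filter (fun v : V => indeg E v = 0)).card +
        2 * (pmin - (Finset.univ.filter (fun v : V => indeg E v = 0)).card)) := by
  classical
  have hrdef : Finset.univ.filter (fun v : V => indeg E v = 0) = roots E := rfl
  rw [hrdef]
  obtain ⟨C0, hC0⟩ := hp.1
  have hME : pcE C0.paths C0.cycles ⊆ E := pcE_subset C0
  have hMin : ∀ v, indeg (pcE C0.paths C0.cycles) v ≤ 1 := pcE_indeg C0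
  have hMout : ∀ v, outdeg (pcE C0.paths C0.cycles) v ≤ 1 := pcE_outdeg C0
  have hMroots : (roots (pcE C0.paths C0.cycles)).card = pmin := by
    rw [← pcE_roots_card C0, hC0]
  have hMcard : (pcE C0.paths C0.cycles).card + pmin = Fintype.card V := by
    rw [← hMroots]
    exact G1 hMin
  have hrle : (roots E).card ≤ pmin := by
    rw [← hMroots]
    apply Finset.card_le_card
    intro v hv
    simp only [roots, Finset.mem_filter, Finset.mem_univ, true_and] at hv ⊢
    have := indeg_mono hME v
    omega
  have hsheaf : ∀ F : Finset (V × V), F ⊆ E → (∀ v, indeg F v ≤ 1) →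
      pmin ≤ (sinks F).card := by
    intro F hFE hFin
    obtain ⟨F', hF'sub, hF'out, hF'card⟩ := select_tails F
    have hF'in : ∀ v, indeg F' v ≤ 1 := fun v => (indeg_mono hF'sub v).trans (hFin v)
    obtain ⟨C, -, hCcard⟩ := B2 F' (hF'sub.trans hFE) hF'in hF'out
    have h1 : pmin ≤ C.paths.card := hp.2 ⟨C, rfl⟩
    have h2 := G2 F
    omega
  constructor
  · -- membership : construct an optimal necklace cover
    obtain ⟨Fx, hMFx, hFxE, hFxin, hFxiff⟩ := extend_sheaf hME hMin
    obtain ⟨D, hD, hDE⟩ := components_cover hFxE hFxin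
    have hO : numOpen D = (roots E).card := by
      rw [coverE_numOpen hD, hDE]
      congr 1
      ext v
      simp only [roots, Finset.mem_filter, Finset.mem_univ, true_and]
      exact hFxiff v
    have hS : numSinks D = pmin := by
      rw [coverE_numSinks hD, hDE]
      have hle1 : pmin ≤ (sinks Fx).card := hsheaf Fx hFxE hFxin
      have hge : (sinks Fx).card ≤ pmin := by
        have h2 := G2 Fx
        have h3 : ((pcE C0.paths C0.cycles).image Prod.fst).card
            ≤ (Fx.image Prod.fst).card :=
          Finset.card_le_card (Finset.image_subset_image hMFx)
        have h4 : (pcE C0.paths C0.cycles).card + (sinks (pcE C0.paths C0.cycles)).card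
            = Fintype.card V := G1' hMout
        have h5 := G2 (pcE C0.paths C0.cycles)
        omega
      omega
    refine ⟨D, hD, ?_⟩
    have hL : numLeaves D = pmin - (roots E).card := by
      unfold numLeaves
      rw [hS, hO]
    rw [hO, hL]
  · -- lower bound
    intro m hm
    obtain ⟨D, hD, rfl⟩ := hm
    have hFE : D.biUnion Prod.snd ⊆ E := coverE_subset hD
    have hFin : ∀ v, indeg (D.biUnion Prod.snd) v ≤ 1 := coverE_indeg_le_one hD
    have hO : numOpen D = (roots (D.biUnion Prod.snd)).card := coverE_numOpen hD
    have hSk : numSinks D = (sinks (D.biUnion Prod.snd)).card := coverE_numSinks hD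
    have hRr : (roots E).card ≤ (roots (D.biUnion Prod.snd)).card := by
      apply Finset.card_le_card
      intro v hv
      simp only [roots, Finset.mem_filter, Finset.mem_univ, true_and] at hv ⊢
      have := indeg_mono hFE v
      omega
    have hpS : pmin ≤ (sinks (D.biUnion Prod.snd)).card := hsheaf _ hFE hFin
    have hRS : (roots (D.biUnion Prod.snd)).card ≤ (sinks (D.biUnion Prod.snd)).card := by
      have h1 := G1 hFin
      have h2 := G2 (D.biUnion Prod.snd)
      have h3 := Finset.card_image_le (s := D.biUnion Prod.snd) (f := Prod.fst)
      omega
    have hL : numLeaves D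
        = (sinks (D.biUnion Prod.snd)).card - (roots (D.biUnion Prod.snd)).card := by
      unfold numLeaves
      rw [hSk, hO]
    rw [hO, hL]
    exact arith_lb hk hRr hrle hpS hRS
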